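/- arXiv:2403.06751 — 4 statements merged into one kernel-verified Lean document; each statement's English description precedes it below -/
import Mathlib

section
/- If S is a sparse collection of dyadic subintervals of [0,1), then for every λ ∈ ℝ, |{x ∈ [0,1) : A_S(1_{[0,1)})(x) ≥ λ}| ≤ 2^{2−λ}. -/
open MeasureTheory
open scoped ENNReal

/-- The dyadic interval `[k/2^n, (k+1)/2^n)`. -/
def dyadicI (n k : ℕ) : Set ℝ := Set.Ico ((k : ℝ) / 2 ^ n) ((k + 1 : ℝ) / 2 ^ n)

/-- The summand of the sparse operator `A_α f` at the point `x`. -/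
noncomputable def Aterm (α : ℕ × ℕ → ℝ) (f : ℝ → ℝ) (x : ℝ) (p : ℕ × ℕ) : ℝ :=
  Set.indicator {q : ℕ × ℕ | q.2 < 2 ^ q.1}
    (fun q => α q * ((2 : ℝ) ^ q.1 * ∫ t in dyadicI q.1 q.2, |f t|)
      * Set.indicator (dyadicI q.1 q.2) (fun _ => (1 : ℝ)) x) p

/-- The sparse operator `A_α f(x) = Σ_J α_J ⟨|f|⟩_J 1_J(x)`. -/
noncomputable def Aop (α : ℕ × ℕ → ℝ) (f : ℝ → ℝ) (x : ℝ) : ℝ := ∑' p, Aterm α f x p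

/-! ### Auxiliary lemmas on dyadic intervals -/

lemma dI_lt (n k : ℕ) : (k : ℝ) / 2 ^ n < (k + 1 : ℝ) / 2 ^ n := by
  apply div_lt_div_of_pos_right (by linarith) (by positivity)

lemma dI_nonempty (n k : ℕ) : (dyadicI n k).Nonempty :=
  Set.nonempty_Ico.2 (dI_lt n k)

lemma dI_subset_Ico {n k : ℕ} (h : k < 2 ^ n) : dyadicI n k ⊆ Set.Ico (0:ℝ) 1 := by
  apply Set.Ico_subset_Ico
  · positivity
  · rw [div_le_one (by positivity)]
    have : (k:ℝ) + 1 ≤ (2:ℝ)^n := by exact_mod_cast Nat.succ_le_of_lt h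
    simpa using this

lemma dI_volume (n k : ℕ) : volume (dyadicI n k) = ENNReal.ofReal (1 / 2 ^ n) := by
  rw [dyadicI, Real.volume_Ico]
  congr 1
  field_simp
  ring

lemma dI_subset_le {n k n' k' : ℕ} (h : dyadicI n k ⊆ dyadicI n' k') : n' ≤ n := by
  rw [dyadicI, dyadicI, Set.Ico_subset_Ico_iff (dI_lt n k)] at h
  have hlen : (1:ℝ) / 2 ^ n ≤ 1 / 2 ^ n' := by
    have h1 := h.1; have h2 := h.2
    have : ((k:ℝ)+1)/2^n - k/2^n ≤ ((k':ℝ)+1)/2^n' - k'/2^n' := by linarith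
    calc (1:ℝ)/2^n = ((k:ℝ)+1)/2^n - k/2^n := by field_simp; ring
    _ ≤ ((k':ℝ)+1)/2^n' - k'/2^n' := this
    _ = 1/2^n' := by field_simp; ring
  have : (2:ℝ)^n' ≤ 2^n := by
    rw [div_le_div_iff₀ (by positivity) (by positivity)] at hlen
    linarith
  have h2n : (2:ℕ)^n' ≤ 2^n := by exact_mod_cast this
  exact Nat.pow_le_pow_iff_right (a := 2) (by norm_num) |>.1 h2n

lemma dI_subset_same {n k k' : ℕ} (h : dyadicI n k ⊆ dyadicI n k') : k = k' := by
  rw [dyadicI, dyadicI, Set.Ico_subset_Ico_iff (dI_lt n k)] at h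
  have h1 := h.1; have h2 := h.2
  have hp : (0:ℝ) < 2^n := by positivity
  rw [div_le_div_iff₀ hp hp] at h1 h2
  have : (k':ℝ) ≤ k := by nlinarith
  have : (k:ℝ) ≤ k' := by nlinarith
  exact_mod_cast le_antisymm (by exact_mod_cast ‹(k:ℝ) ≤ k'›) (by exact_mod_cast ‹(k':ℝ) ≤ k›)

lemma dI_inj {n k n' k' : ℕ} (h : dyadicI n k ⊆ dyadicI n' k') (h' : dyadicI n' k' ⊆ dyadicI n k) :
    n = n' ∧ k = k' := by
  have hn : n = n' := le_antisymm (dI_subset_le h') (dI_subset_le h)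
  subst hn
  exact ⟨rfl, dI_subset_same h⟩

lemma dI_mem_subset {n k n' k' : ℕ} {x : ℝ} (hn : n' ≤ n)
    (hx : x ∈ dyadicI n k) (hx' : x ∈ dyadicI n' k') : dyadicI n k ⊆ dyadicI n' k' := by
  obtain ⟨hx1, hx2⟩ := hx
  obtain ⟨hx1', hx2'⟩ := hx'
  set d : ℕ := 2 ^ (n - n') with hd
  have hdd : (2:ℝ) ^ n' * d = 2 ^ n := by
    rw [hd]; push_cast; rw [← pow_add]; congr 1; omega
  have hp : (0:ℝ) < 2 ^ n := by positivity
  have hp' : (0:ℝ) < 2 ^ n' := by positivity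
  have a1 : (k:ℝ) ≤ 2 ^ n * x := by rw [div_le_iff₀ hp] at hx1; linarith [hx1]
  have a2 : 2 ^ n * x < (k:ℝ) + 1 := by rw [lt_div_iff₀ hp] at hx2; linarith [hx2]
  have b1 : ((k' * d : ℕ) : ℝ) ≤ 2 ^ n * x := by
    push_cast
    rw [div_le_iff₀ hp'] at hx1'
    calc (k':ℝ) * d ≤ (x * 2 ^ n') * d := by
          apply mul_le_mul_of_nonneg_right hx1' (by positivity)
    _ = 2 ^ n * x := by rw [← hdd]; ring
  have b2 : 2 ^ n * x < (((k' + 1) * d : ℕ) : ℝ) := by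
    push_cast
    rw [lt_div_iff₀ hp'] at hx2'
    calc 2 ^ n * x = (x * 2 ^ n') * d := by rw [← hdd]; ring
    _ < ((k':ℝ) + 1) * d := by
        apply mul_lt_mul_of_pos_right hx2' (by positivity)
  have c1 : k' * d ≤ k := by
    have : ((k' * d : ℕ) : ℝ) < (k:ℝ) + 1 := lt_of_le_of_lt b1 a2
    have : k' * d < k + 1 := by exact_mod_cast this
    omega
  have c2 : k + 1 ≤ (k' + 1) * d := by
    have : (k:ℝ) < (((k' + 1) * d : ℕ) : ℝ) := lt_of_le_of_lt a1 b2
    have : k < (k' + 1) * d := by exact_mod_cast this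
    omega
  apply Set.Ico_subset_Ico
  · rw [div_le_div_iff₀ hp' hp]
    calc (k':ℝ) * 2 ^ n = (k' * d : ℕ) * 2 ^ n' := by push_cast; rw [← hdd]; ring
    _ ≤ (k:ℝ) * 2 ^ n' := by
        apply mul_le_mul_of_nonneg_right _ (le_of_lt hp')
        exact_mod_cast c1
  · rw [div_le_div_iff₀ hp hp']
    calc ((k:ℝ) + 1) * 2 ^ n' ≤ ((k' + 1) * d : ℕ) * 2 ^ n' := by
          apply mul_le_mul_of_nonneg_right _ (le_of_lt hp')
          exact_mod_cast c2
    _ = ((k':ℝ) + 1) * 2 ^ n := by push_cast; rw [← hdd]; ring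

/-! ### Chains -/

/-- The intervals of `S` containing `J p`. -/
def chainOf (S : Set (ℕ × ℕ)) (p : ℕ × ℕ) : Set (ℕ × ℕ) :=
  {q ∈ S | dyadicI p.1 p.2 ⊆ dyadicI q.1 q.2}

lemma chainOf_finite (S : Set (ℕ × ℕ)) (hS : ∀ p ∈ S, p.2 < 2 ^ p.1) (p : ℕ × ℕ) :
    (chainOf S p).Finite := by
  apply Set.Finite.subset (Set.finite_Iic (p.1, 2 ^ p.1))
  rintro ⟨n, k⟩ ⟨hq, hsub⟩
  have h1 : n ≤ p.1 := dI_subset_le hsub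
  exact ⟨h1, le_of_lt (lt_of_lt_of_le (hS _ hq) (Nat.pow_le_pow_right (by norm_num) h1))⟩

/-- The depth of `p`: the number of intervals of `S` containing `J p`. -/
noncomputable def cdepth (S : Set (ℕ × ℕ)) (p : ℕ × ℕ) : ℕ := (chainOf S p).ncard

lemma self_mem_chainOf {S : Set (ℕ × ℕ)} {p : ℕ × ℕ} (hp : p ∈ S) : p ∈ chainOf S p :=
  ⟨hp, subset_rfl⟩

lemma chain_comparable {S : Set (ℕ × ℕ)} {p q r : ℕ × ℕ}
    (hq : q ∈ chainOf S p) (hr : r ∈ chainOf S p) :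
    dyadicI q.1 q.2 ⊆ dyadicI r.1 r.2 ∨ dyadicI r.1 r.2 ⊆ dyadicI q.1 q.2 := by
  obtain ⟨x, hx⟩ := dI_nonempty p.1 p.2
  rcases le_total r.1 q.1 with h | h
  · exact Or.inl (dI_mem_subset h (hq.2 hx) (hr.2 hx))
  · exact Or.inr (dI_mem_subset h (hr.2 hx) (hq.2 hx))

/-- Existence of an element of the chain over `p` with any prescribed smaller depth. -/
lemma exists_depth (S : Set (ℕ × ℕ)) (hS : ∀ p ∈ S, p.2 < 2 ^ p.1) :
    ∀ N, ∀ p ∈ S, cdepth S p = N → ∀ m, 1 ≤ m → m ≤ N →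
      ∃ q ∈ S, dyadicI p.1 p.2 ⊆ dyadicI q.1 q.2 ∧ cdepth S q = m := by
  intro N
  induction N using Nat.strong_induction_on with
  | _ N ih =>
    intro p hp hN m hm1 hmN
    rcases eq_or_lt_of_le hmN with heq | hlt
    · exact ⟨p, hp, subset_rfl, by rw [hN, heq]⟩
    · have hfin : (chainOf S p \ {p}).Finite := ((chainOf_finite S hS p).diff)
      have hne : (chainOf S p \ {p}).Nonempty := by
        by_contra hne
        rw [Set.not_nonempty_iff_eq_empty, Set.diff_eq_empty] at hne
        have : cdepth S p ≤ 1 := by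
          calc cdepth S p ≤ ({p} : Set (ℕ × ℕ)).ncard :=
                Set.ncard_le_ncard hne (Set.finite_singleton p)
          _ = 1 := Set.ncard_singleton p
        omega
      obtain ⟨q', hq'mem, hq'max⟩ := Set.Finite.exists_maximalFor Prod.fst _ hfin hne
      obtain ⟨⟨hq'S, hq'sub⟩, hq'ne⟩ := hq'mem
      have hq'ne : q' ≠ p := hq'ne
      have hchain : chainOf S q' = chainOf S p \ {p} := by
        ext r
        constructor
        · rintro ⟨hrS, hrsub⟩
          refine ⟨⟨hrS, hq'sub.trans hrsub⟩, ?_⟩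
          intro hrp
          rw [Set.mem_singleton_iff] at hrp
          subst hrp
          obtain ⟨h1, h2⟩ := dI_inj hq'sub hrsub
          exact hq'ne (Prod.ext h1 h2).symm
        · rintro ⟨⟨hrS, hrsub⟩, hrp⟩
          rw [Set.mem_singleton_iff] at hrp
          refine ⟨hrS, ?_⟩
          rcases chain_comparable (S := S) ⟨hq'S, hq'sub⟩ ⟨hrS, hrsub⟩ with h | h
          · exact h
          · have h1 : q'.1 ≤ r.1 := dI_subset_le h
            have h2 : r.1 ≤ q'.1 := by
              by_contra hcon
              push_neg at hcon
              exact absurd (hq'max ⟨⟨hrS, hrsub⟩, hrp⟩ (le_of_lt hcon)) (by omega)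
            have heq : r.1 = q'.1 := le_antisymm h2 h1
            rw [heq] at h
            have := dI_subset_same h
            have : r = q' := Prod.ext heq this
            rw [this]
      have hdq' : cdepth S q' = N - 1 := by
        rw [cdepth, hchain,
          Set.ncard_diff_singleton_of_mem (self_mem_chainOf hp)]
        rw [cdepth] at hN; omega
      obtain ⟨q, hqS, hqsub, hqd⟩ := ih (N-1) (by omega) q' hq'S hdq' m hm1 (by omega)
      exact ⟨q, hqS, hq'sub.trans hqsub, hqd⟩

/-! ### Evaluating the operator -/

lemma dI_integral {n k : ℕ} (h : k < 2 ^ n) :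
    ∫ t in dyadicI n k, |Set.indicator (Set.Ico (0:ℝ) 1) (fun _ => (1:ℝ)) t| = 1 / 2 ^ n := by
  have hmeas : MeasurableSet (dyadicI n k) := measurableSet_Ico
  rw [setIntegral_congr_fun hmeas (g := fun _ => (1:ℝ)) ?_]
  · rw [setIntegral_const, measureReal_def, dI_volume, smul_eq_mul, mul_one,
      ENNReal.toReal_ofReal (by positivity)]
  · intro t ht
    have := dI_subset_Ico h ht
    simp [Set.indicator_of_mem this]

lemma Aterm_eq (S : Set (ℕ × ℕ)) (hS : ∀ p ∈ S, p.2 < 2 ^ p.1) (x : ℝ) (p : ℕ × ℕ) :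
    Aterm (Set.indicator S fun _ => 1) (Set.indicator (Set.Ico (0 : ℝ) 1) fun _ => 1) x p
      = Set.indicator {q : ℕ × ℕ | q ∈ S ∧ x ∈ dyadicI q.1 q.2} (fun _ => (1:ℝ)) p := by
  rw [Aterm]
  by_cases hv : p.2 < 2 ^ p.1
  · rw [Set.indicator_of_mem (by exact hv)]
    rw [dI_integral hv]
    by_cases hpS : p ∈ S
    · rw [Set.indicator_of_mem hpS]
      by_cases hx : x ∈ dyadicI p.1 p.2
      · rw [Set.indicator_of_mem hx, Set.indicator_of_mem (by exact ⟨hpS, hx⟩)]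
        field_simp
      · rw [Set.indicator_of_notMem hx,
          Set.indicator_of_notMem (s := {q : ℕ × ℕ | q ∈ S ∧ x ∈ dyadicI q.1 q.2})
            (fun hc => hx (Set.mem_setOf.1 hc).2)]
        ring
    · rw [Set.indicator_of_notMem hpS,
        Set.indicator_of_notMem (s := {q : ℕ × ℕ | q ∈ S ∧ x ∈ dyadicI q.1 q.2})
          (fun hc => hpS (Set.mem_setOf.1 hc).1)]
      ring
  · rw [Set.indicator_of_notMem (by exact hv), Set.indicator_of_notMem (by
      intro hc
      exact hv (hS p hc.1))]

open scoped Classical in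
lemma count_of_le_tsum (T : Set (ℕ × ℕ)) {lam : ℝ} (hlam : 0 < lam)
    (h : lam ≤ ∑' p, T.indicator (fun _ => (1:ℝ)) p) :
    T.Finite ∧ lam ≤ (T.ncard : ℝ) := by
  by_cases hfin : T.Finite
  · refine ⟨hfin, ?_⟩
    have : ∑' p, T.indicator (fun _ => (1:ℝ)) p = (T.ncard : ℝ) := by
      rw [tsum_eq_sum (s := hfin.toFinset) (by
        intro p hp
        exact Set.indicator_of_notMem (by simpa using hp) _)]
      rw [Finset.sum_indicator_eq_sum_filter]
      have : Finset.filter (fun p => p ∈ T) hfin.toFinset = hfin.toFinset := by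
        apply Finset.filter_true_of_mem
        intro p hp
        simpa using hp
      rw [this, Finset.sum_const, nsmul_eq_mul, mul_one, Set.ncard_eq_toFinset_card T hfin]
    rwa [this] at h
  · exfalso
    have hinf : T.Infinite := hfin
    have : ¬ Summable (T.indicator (fun _ => (1:ℝ))) := by
      rw [← summable_subtype_iff_indicator]
      have : Infinite T := Set.infinite_coe_iff.2 hinf
      exact fun hs => one_ne_zero ((summable_const_iff (1:ℝ)).1 hs)
    rw [tsum_eq_zero_of_not_summable this] at h
    linarith

/-! ### The measure-theoretic estimates -/

section Measures

variable (S : Set (ℕ × ℕ)) (E : ℕ × ℕ → Set ℝ)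

/-- elements of depth at least `m` -/
def Adeep (m : ℕ) : Set (ℕ × ℕ) := {p | p ∈ S ∧ m ≤ cdepth S p}

/-- elements of depth exactly `m` -/
def Sexact (m : ℕ) : Set (ℕ × ℕ) := {p | p ∈ S ∧ cdepth S p = m}

/-- total length of intervals of depth at least `m` -/
noncomputable def Usum (m : ℕ) : ℝ≥0∞ :=
  ∑' p, (Adeep S m).indicator (fun p => volume (dyadicI p.1 p.2)) p

/-- total length of intervals of depth exactly `m` -/
noncomputable def ssum (m : ℕ) : ℝ≥0∞ :=
  ∑' p, (Sexact S m).indicator (fun p => volume (dyadicI p.1 p.2)) p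

lemma Usum_split (m : ℕ) : Usum S m = ssum S m + Usum S (m+1) := by
  rw [Usum, ssum, Usum, ← ENNReal.tsum_add]
  apply tsum_congr
  intro p
  by_cases hp : p ∈ Adeep S m
  · rw [Set.indicator_of_mem hp]
    obtain ⟨hpS, hpd⟩ := hp
    rcases eq_or_lt_of_le hpd with heq | hlt
    · rw [Set.indicator_of_mem (by exact ⟨hpS, heq.symm⟩),
        Set.indicator_of_notMem (fun hc => by
          have := (Set.mem_setOf.1 hc).2; omega)]
      simp
    · rw [Set.indicator_of_notMem (fun hc => by
          have := (Set.mem_setOf.1 hc).2; omega),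
        Set.indicator_of_mem (by exact ⟨hpS, by omega⟩)]
      simp
  · rw [Set.indicator_of_notMem hp,
      Set.indicator_of_notMem (fun hc => hp ⟨(Set.mem_setOf.1 hc).1, le_of_eq (Set.mem_setOf.1 hc).2.symm⟩),
      Set.indicator_of_notMem (fun hc => hp ⟨(Set.mem_setOf.1 hc).1, by
        have := (Set.mem_setOf.1 hc).2; omega⟩)]
    simp

lemma ssum_le_Usum (m : ℕ) : ssum S m ≤ Usum S m := by
  apply ENNReal.tsum_le_tsum
  intro p
  apply Set.indicator_le_indicator_of_subset
  · rintro q ⟨h1, h2⟩; exact ⟨h1, le_of_eq h2.symm⟩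
  · intro q; exact zero_le

/-- The total length of intervals in a subfamily `B ⊆ S` is at most twice the measure
of the union of the corresponding `E p`. -/
lemma Usum_le_E (hEmeas : ∀ p ∈ S, MeasurableSet (E p))
    (hEsize : ∀ p ∈ S, volume (dyadicI p.1 p.2) ≤ 2 * volume (E p))
    (hdisj : S.PairwiseDisjoint E)
    (B : Set (ℕ × ℕ)) (hB : B ⊆ S) :
    ∑' p, B.indicator (fun p => volume (dyadicI p.1 p.2)) p
      ≤ 2 * volume (⋃ p ∈ B, E p) := by
  have hcount : B.Countable := B.to_countable
  rw [measure_biUnion hcount (hdisj.subset hB) (fun p hp => hEmeas p (hB hp)),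
    ← ENNReal.tsum_mul_left, tsum_subtype B (fun p => 2 * volume (E p))]
  apply ENNReal.tsum_le_tsum
  intro p
  by_cases hp : p ∈ B
  · rw [Set.indicator_of_mem hp, Set.indicator_of_mem hp]
    exact hEsize p (hB hp)
  · rw [Set.indicator_of_notMem hp, Set.indicator_of_notMem hp]

end Measures

/-- If `S` is a sparse collection of dyadic subintervals of `[0,1)`, then for every `λ`,
`|{x ∈ [0,1) : A_S(1_{[0,1)})(x) ≥ λ}| ≤ 2^{2-λ}`. -/
theorem stmt2 (S : Set (ℕ × ℕ)) (hS : ∀ p ∈ S, p.2 < 2 ^ p.1)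
    (E : ℕ × ℕ → Set ℝ)
    (hEsub : ∀ p ∈ S, E p ⊆ dyadicI p.1 p.2)
    (hEmeas : ∀ p ∈ S, MeasurableSet (E p))
    (hEsize : ∀ p ∈ S, volume (dyadicI p.1 p.2) ≤ 2 * volume (E p))
    (hdisj : S.PairwiseDisjoint E)
    (lam : ℝ) :
    volume {x ∈ Set.Ico (0 : ℝ) 1 |
        lam ≤ Aop (Set.indicator S fun _ => 1)
                (Set.indicator (Set.Ico (0 : ℝ) 1) fun _ => 1) x}
      ≤ ENNReal.ofReal ((2 : ℝ) ^ ((2 : ℝ) - lam)) := by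
  by_cases hcase : lam ≤ 2
  · calc volume {x ∈ Set.Ico (0:ℝ) 1 |
        lam ≤ Aop (Set.indicator S fun _ => 1)
                (Set.indicator (Set.Ico (0 : ℝ) 1) fun _ => 1) x}
        ≤ volume (Set.Ico (0:ℝ) 1) := measure_mono (Set.sep_subset _ _)
    _ = 1 := by rw [Real.volume_Ico]; norm_num
    _ ≤ ENNReal.ofReal ((2:ℝ) ^ ((2:ℝ) - lam)) := by
        rw [show (1:ℝ≥0∞) = ENNReal.ofReal 1 by simp]
        apply ENNReal.ofReal_le_ofReal
        apply Real.one_le_rpow (by norm_num) (by linarith)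
  · push_neg at hcase
    set m : ℕ := ⌈lam⌉₊ with hm
    have hlamm : lam ≤ (m:ℝ) := Nat.le_ceil lam
    have hm3 : 1 ≤ m := by
      have h0 : (0:ℝ) < (m:ℝ) := by linarith
      have : 0 < m := by exact_mod_cast h0
      omega
    -- Step 1 : the level set is covered by the intervals of depth exactly m
    have hincl : {x ∈ Set.Ico (0:ℝ) 1 |
        lam ≤ Aop (Set.indicator S fun _ => 1)
                (Set.indicator (Set.Ico (0 : ℝ) 1) fun _ => 1) x}
        ⊆ ⋃ q ∈ Sexact S m, dyadicI q.1 q.2 := by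
      rintro x ⟨hx01, hxA⟩
      have hAop : Aop (Set.indicator S fun _ => 1)
          (Set.indicator (Set.Ico (0 : ℝ) 1) fun _ => 1) x
          = ∑' p, ({q : ℕ × ℕ | q ∈ S ∧ x ∈ dyadicI q.1 q.2}).indicator
              (fun _ => (1:ℝ)) p := tsum_congr (Aterm_eq S hS x)
      rw [hAop] at hxA
      obtain ⟨hTfin, hTcard⟩ := count_of_le_tsum _ (by linarith) hxA
      set T := {q : ℕ × ℕ | q ∈ S ∧ x ∈ dyadicI q.1 q.2} with hT
      have hTne : T.Nonempty := by
        apply Set.nonempty_of_ncard_ne_zero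
        intro hc
        rw [hc] at hTcard
        norm_num at hTcard
        linarith
      obtain ⟨p, hpT, hpmax⟩ := Set.Finite.exists_maximalFor Prod.fst _ hTfin hTne
      have hchain : T ⊆ chainOf S p := by
        rintro q hq
        obtain ⟨hqS, hqx⟩ := hq
        refine ⟨hqS, ?_⟩
        have hq1 : q.1 ≤ p.1 := by
          rcases le_total q.1 p.1 with h | h
          · exact h
          · have := hpmax ⟨hqS, hqx⟩ h
            omega
        exact dI_mem_subset hq1 hpT.2 hqx
      have hdep : m ≤ cdepth S p := by
        have h1 : m ≤ T.ncard := Nat.ceil_le.2 hTcard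
        exact le_trans h1 (Set.ncard_le_ncard hchain (chainOf_finite S hS p))
      obtain ⟨q, hqS, hsub, hqd⟩ :=
        exists_depth S hS (cdepth S p) p hpT.1 rfl m hm3 hdep
      exact Set.mem_biUnion (show q ∈ Sexact S m from ⟨hqS, hqd⟩) (hsub hpT.2)
    -- Step 2 : measure of the cover
    have hcover : volume (⋃ q ∈ Sexact S m, dyadicI q.1 q.2) ≤ ssum S m := by
      calc volume (⋃ q ∈ Sexact S m, dyadicI q.1 q.2)
          ≤ ∑' q : (Sexact S m), volume (dyadicI (q:ℕ×ℕ).1 (q:ℕ×ℕ).2) :=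
            measure_biUnion_le volume (Set.to_countable _) _
      _ = ssum S m := by rw [ssum]; exact tsum_subtype (Sexact S m) (fun p => volume (dyadicI p.1 p.2))
    -- Step 3 : the exponential decay of Usum
    have hE_bound : ∀ q ∈ S, 2 * volume (dyadicI q.1 q.2 \ E q) ≤ volume (dyadicI q.1 q.2) := by
      intro q hq
      have hJfin : volume (dyadicI q.1 q.2) ≠ ⊤ := by
        rw [dI_volume]; exact ENNReal.ofReal_ne_top
      have hEfin : volume (E q) ≠ ⊤ :=
        fun hc => hJfin (top_le_iff.1 (hc ▸ measure_mono (hEsub q hq)))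
      have hadd : volume (E q) + volume (dyadicI q.1 q.2 \ E q) = volume (dyadicI q.1 q.2) := by
        rw [measure_add_diff (hEmeas q hq).nullMeasurableSet,
          Set.union_eq_self_of_subset_left (hEsub q hq)]
      have hdle : volume (dyadicI q.1 q.2 \ E q) ≤ volume (E q) := by
        have h2 : volume (E q) + volume (dyadicI q.1 q.2 \ E q) ≤ volume (E q) + volume (E q) := by
          rw [hadd, ← two_mul]
          exact hEsize q hq
        exact (ENNReal.add_le_add_iff_left hEfin).1 h2
      calc 2 * volume (dyadicI q.1 q.2 \ E q)
          = volume (dyadicI q.1 q.2 \ E q) + volume (dyadicI q.1 q.2 \ E q) := two_mul _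
      _ ≤ volume (E q) + volume (dyadicI q.1 q.2 \ E q) := by
          exact add_le_add_left hdle _
      _ = volume (dyadicI q.1 q.2) := hadd
    have hstep : ∀ j, 1 ≤ j → Usum S (j+1) ≤ ssum S j := by
      intro j hj
      calc Usum S (j+1) ≤ 2 * volume (⋃ p ∈ Adeep S (j+1), E p) :=
            Usum_le_E S E hEmeas hEsize hdisj _ (fun p hp => hp.1)
      _ ≤ 2 * volume (⋃ q ∈ Sexact S j, dyadicI q.1 q.2 \ E q) := by
          apply mul_le_mul_right
          apply measure_mono
          rintro y hy
          rw [Set.mem_iUnion₂] at hy ⊢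
          obtain ⟨p, hp, hyp⟩ := hy
          obtain ⟨q, hqS, hsub, hqd⟩ :=
            exists_depth S hS (cdepth S p) p hp.1 rfl j hj (le_trans (by omega) hp.2)
          refine ⟨q, ⟨hqS, hqd⟩, ?_⟩
          have hpq : p ≠ q := by
            intro hc
            have h2 := hp.2
            rw [hc] at h2
            omega
          refine ⟨(hEsub p hp.1).trans (hsub) hyp, ?_⟩
          intro hyq
          exact (hdisj hp.1 hqS hpq).ne_of_mem hyp hyq rfl
      _ ≤ 2 * ∑' q : (Sexact S j), volume (dyadicI (q:ℕ×ℕ).1 (q:ℕ×ℕ).2 \ E q) := by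
          apply mul_le_mul_right
          exact measure_biUnion_le volume (Set.to_countable _) _
      _ = ∑' q : (Sexact S j), 2 * volume (dyadicI (q:ℕ×ℕ).1 (q:ℕ×ℕ).2 \ E q) := by
          rw [ENNReal.tsum_mul_left]
      _ ≤ ∑' q : (Sexact S j), volume (dyadicI (q:ℕ×ℕ).1 (q:ℕ×ℕ).2) := by
          apply ENNReal.tsum_le_tsum
          rintro ⟨q, hq⟩
          exact hE_bound q hq.1
      _ = ssum S j := by rw [ssum]; exact tsum_subtype (Sexact S j) (fun p => volume (dyadicI p.1 p.2))
    have hU1 : Usum S 1 ≤ 2 := by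
      calc Usum S 1 ≤ 2 * volume (⋃ p ∈ Adeep S 1, E p) :=
            Usum_le_E S E hEmeas hEsize hdisj _ (fun p hp => hp.1)
      _ ≤ 2 * volume (Set.Ico (0:ℝ) 1) := by
          apply mul_le_mul_right
          apply measure_mono
          rintro y hy
          rw [Set.mem_iUnion₂] at hy
          obtain ⟨p, hp, hyp⟩ := hy
          exact dI_subset_Ico (hS p hp.1) (hEsub p hp.1 hyp)
      _ = 2 := by rw [Real.volume_Ico]; norm_num
    have hdouble : ∀ j, 1 ≤ j → 2 * Usum S (j+1) ≤ Usum S j := by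
      intro j hj
      calc 2 * Usum S (j+1) = Usum S (j+1) + Usum S (j+1) := two_mul _
      _ ≤ ssum S j + Usum S (j+1) := add_le_add_left (hstep j hj) _
      _ = Usum S j := (Usum_split S j).symm
    have hUdecay : ∀ j, Usum S (j+1) ≤ (2⁻¹ : ℝ≥0∞)^j * 2 := by
      intro j
      induction j with
      | zero => simpa using hU1
      | succ j ihj =>
        have h2 : 2 * Usum S (j+2) ≤ Usum S (j+1) := hdouble (j+1) (by omega)
        have : Usum S (j+2) ≤ 2⁻¹ * ((2⁻¹:ℝ≥0∞)^j * 2) := by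
          calc Usum S (j+2) = 2⁻¹ * (2 * Usum S (j+2)) := by
                rw [← mul_assoc, ENNReal.inv_mul_cancel (by norm_num) (by norm_num), one_mul]
          _ ≤ 2⁻¹ * Usum S (j+1) := mul_le_mul_right h2 _
          _ ≤ 2⁻¹ * ((2⁻¹:ℝ≥0∞)^j * 2) := mul_le_mul_right ihj _
        calc Usum S (j+2) ≤ 2⁻¹ * ((2⁻¹:ℝ≥0∞)^j * 2) := this
        _ = (2⁻¹:ℝ≥0∞)^(j+1) * 2 := by ring
    -- Step 4 : put everything together
    have hfinal : (2⁻¹ : ℝ≥0∞)^(m-1) * 2 ≤ ENNReal.ofReal ((2:ℝ) ^ ((2:ℝ) - lam)) := by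
      have hreal : ((2:ℝ)⁻¹)^(m-1) * 2 ≤ (2:ℝ) ^ ((2:ℝ) - lam) := by
        have h1 : ((2:ℝ)⁻¹)^(m-1) * 2 = (2:ℝ) ^ ((2:ℝ) - (m:ℝ)) := by
          have e1 : (2:ℝ) ^ ((2:ℝ) - (m:ℝ)) = (2:ℝ)^(2:ℝ) / (2:ℝ)^((m:ℕ):ℝ) :=
            Real.rpow_sub (by norm_num) _ _
          have e2 : (2:ℝ)^((m:ℕ):ℝ) = (2:ℝ)^(m:ℕ) := Real.rpow_natCast 2 m
          have e3 : (2:ℝ)^(2:ℝ) = 4 := by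
            rw [show (2:ℝ) = ((2:ℕ):ℝ) by norm_num, Real.rpow_natCast]
            norm_num
          rw [e1, e2, e3, inv_pow]
          have hpow : (2:ℝ)^m = 2^(m-1) * 2 := by
            rw [← pow_succ]
            congr 1
            omega
          rw [hpow]
          have hne : (2:ℝ)^(m-1) ≠ 0 := by positivity
          field_simp
          ring
        rw [h1]
        apply Real.rpow_le_rpow_of_exponent_le (by norm_num)
        linarith
      calc (2⁻¹ : ℝ≥0∞)^(m-1) * 2
          = ENNReal.ofReal (((2:ℝ)⁻¹)^(m-1) * 2) := by
            rw [ENNReal.ofReal_mul (by positivity), ENNReal.ofReal_pow (by norm_num),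
              ENNReal.ofReal_inv_of_pos (by norm_num), ENNReal.ofReal_ofNat]
      _ ≤ ENNReal.ofReal ((2:ℝ) ^ ((2:ℝ) - lam)) := ENNReal.ofReal_le_ofReal hreal
    calc volume {x ∈ Set.Ico (0:ℝ) 1 |
        lam ≤ Aop (Set.indicator S fun _ => 1)
                (Set.indicator (Set.Ico (0 : ℝ) 1) fun _ => 1) x}
        ≤ volume (⋃ q ∈ Sexact S m, dyadicI q.1 q.2) := measure_mono hincl
    _ ≤ ssum S m := hcover
    _ ≤ Usum S m := ssum_le_Usum S m
    _ = Usum S ((m-1)+1) := by congr 1; omega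
    _ ≤ (2⁻¹ : ℝ≥0∞)^(m-1) * 2 := hUdecay (m-1)
    _ ≤ ENNReal.ofReal ((2:ℝ) ^ ((2:ℝ) - lam)) := hfinal
end

section
/- Let E_1, E_2 ⊆ [0,1) be measurable, α_1, α_2 nonnegative sequences over the dyadic subintervals of [0,1), and γ ≥ 0. Set E = (E_1/2) ∪ (E_2/2 + 1/2), α = α_1 ⊕_γ α_2, and x = |E|. Then for every λ ∈ ℝ, |{t ∈ [0,1) : A_α(1_E)(t) ≥ λ + γx}| = (1/2)(|{t : A_{α_1}(1_{E_1})(t) ≥ λ}| + |{t : A_{α_2}(1_{E_2})(t) ≥ λ}|). -/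
open MeasureTheory

/-- Concatenation `α ⊕_γ β` of two sequences over the dyadic subintervals of `[0,1)`. -/
def concat (α β : ℕ × ℕ → ℝ) (γ : ℝ) : ℕ × ℕ → ℝ
  | (0, _) => γ
  | (n + 1, k) => if k < 2 ^ n then α (n, k) else β (n, k - 2 ^ n)

lemma Aterm_apply (α : ℕ × ℕ → ℝ) (f : ℝ → ℝ) (x : ℝ) (n k : ℕ) :
    Aterm α f x (n, k) = if k < 2 ^ n then
      α (n, k) * ((2 : ℝ) ^ n * ∫ t in dyadicI n k, |f t|)
        * Set.indicator (dyadicI n k) (fun _ => (1 : ℝ)) x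
    else 0 := by
  simp [Aterm, Set.indicator_apply]

def Eset (E₁ E₂ : Set ℝ) : Set ℝ := (fun s => s / 2) '' E₁ ∪ (fun s => s / 2 + 1 / 2) '' E₂

lemma Eset_preimage (E₁ E₂ : Set ℝ) :
    Eset E₁ E₂ = (fun t : ℝ => 2 * t) ⁻¹' E₁ ∪ (fun t : ℝ => 2 * t - 1) ⁻¹' E₂ := by
  unfold Eset
  congr 1
  · ext t
    simp only [Set.mem_image, Set.mem_preimage]
    constructor
    · rintro ⟨s, hs, heq⟩; rwa [show 2 * t = s by linarith]
    · intro h; exact ⟨2 * t, h, by ring⟩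
  · ext t
    simp only [Set.mem_image, Set.mem_preimage]
    constructor
    · rintro ⟨s, hs, heq⟩; rwa [show 2 * t - 1 = s by linarith]
    · intro h; exact ⟨2 * t - 1, h, by ring⟩

lemma Eset_subset {E₁ E₂ : Set ℝ} (hE₁ : E₁ ⊆ Set.Ico 0 1) (hE₂ : E₂ ⊆ Set.Ico 0 1) :
    Eset E₁ E₂ ⊆ Set.Ico 0 1 := by
  rw [Eset_preimage]
  rintro t (ht | ht)
  · have := hE₁ ht; simp only [Set.mem_Ico] at this ⊢; constructor <;> linarith [this.1, this.2]
  · have := hE₂ ht; simp only [Set.mem_Ico] at this ⊢; constructor <;> linarith [this.1, this.2]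

lemma Eset_meas {E₁ E₂ : Set ℝ} (hm₁ : MeasurableSet E₁) (hm₂ : MeasurableSet E₂) :
    MeasurableSet (Eset E₁ E₂) := by
  rw [Eset_preimage]
  exact (hm₁.preimage (by fun_prop)).union (hm₂.preimage (by fun_prop))

lemma measurableSet_dyadicI (n k : ℕ) : MeasurableSet (dyadicI n k) := measurableSet_Ico

lemma pre_two_Ico (a b : ℝ) : (fun t : ℝ => 2 * t) ⁻¹' Set.Ico a b = Set.Ico (a / 2) (b / 2) := by
  ext t
  simp only [Set.mem_preimage, Set.mem_Ico]
  constructor <;> rintro ⟨h1, h2⟩ <;> constructor <;> linarith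

lemma pre_two_sub_Ico (a b : ℝ) :
    (fun t : ℝ => 2 * t - 1) ⁻¹' Set.Ico a b = Set.Ico ((a + 1) / 2) ((b + 1) / 2) := by
  ext t
  simp only [Set.mem_preimage, Set.mem_Ico]
  constructor <;> rintro ⟨h1, h2⟩ <;> constructor <;> linarith

lemma dyadic_pre (n k : ℕ) : (fun t : ℝ => 2 * t) ⁻¹' dyadicI n k = dyadicI (n + 1) k := by
  rw [dyadicI, dyadicI, pre_two_Ico, pow_succ, div_div, div_div]

lemma dyadic_pre' (n k : ℕ) :
    (fun t : ℝ => 2 * t - 1) ⁻¹' dyadicI n k = dyadicI (n + 1) (k + 2 ^ n) := by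
  rw [dyadicI, dyadicI, pre_two_sub_Ico]
  congr 1 <;> push_cast <;> rw [pow_succ] <;> field_simp <;> ring

lemma vol_pre_two (S : Set ℝ) : volume ((fun t : ℝ => 2 * t) ⁻¹' S) = volume S / 2 := by
  rw [Real.volume_preimage_mul_left (two_ne_zero) S]
  rw [show |(2:ℝ)⁻¹| = 2⁻¹ by norm_num, ENNReal.ofReal_inv_of_pos two_pos]
  rw [show ENNReal.ofReal (2:ℝ) = 2 by norm_num]
  rw [ENNReal.div_eq_inv_mul]

lemma vol_pre_two_sub (S : Set ℝ) : volume ((fun t : ℝ => 2 * t - 1) ⁻¹' S) = volume S / 2 := by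
  have h : (fun t : ℝ => 2 * t - 1) ⁻¹' S = (fun t : ℝ => 2 * t) ⁻¹' ((fun u : ℝ => (-1) + u) ⁻¹' S) := by
    ext t
    simp only [Set.mem_preimage]
    rw [show (-1 : ℝ) + 2 * t = 2 * t - 1 by ring]
  rw [h, vol_pre_two, measure_preimage_add]

lemma ind_pre (g : ℝ → ℝ) (I : Set ℝ) (t : ℝ) :
    Set.indicator (g ⁻¹' I) (fun _ => (1:ℝ)) t = Set.indicator I (fun _ => (1:ℝ)) (g t) := by
  by_cases h : g t ∈ I <;> simp [Set.indicator_apply, h]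

lemma integral_abs_indicator {E : Set ℝ} (hm : MeasurableSet E) {I : Set ℝ} :
    ∫ s in I, |Set.indicator E (fun _ => (1:ℝ)) s| = (volume (E ∩ I)).toReal := by
  have habs : ∀ s, |Set.indicator E (fun _ => (1:ℝ)) s| = Set.indicator E (fun _ => (1:ℝ)) s :=
    fun s => abs_of_nonneg (Set.indicator_apply_nonneg (fun _ => zero_le_one))
  simp_rw [habs]
  rw [MeasureTheory.setIntegral_indicator hm, MeasureTheory.setIntegral_const, smul_eq_mul,
    mul_one, Set.inter_comm]
  rfl
lemma Eset_inter_left {E₁ E₂ : Set ℝ} (hE₂ : E₂ ⊆ Set.Ico 0 1) (n k : ℕ) (hk : k < 2 ^ n) :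
    Eset E₁ E₂ ∩ dyadicI (n + 1) k = (fun t : ℝ => 2 * t) ⁻¹' (E₁ ∩ dyadicI n k) := by
  rw [Eset_preimage, ← dyadic_pre, Set.union_inter_distrib_right, Set.preimage_inter]
  suffices h : (fun t : ℝ => 2 * t - 1) ⁻¹' E₂ ∩ (fun t : ℝ => 2 * t) ⁻¹' dyadicI n k = ∅ by
    rw [h, Set.union_empty]
  ext t
  simp only [Set.mem_inter_iff, Set.mem_preimage, Set.mem_empty_iff_false, iff_false, not_and]
  intro h2 hmem
  have h0 : (0 : ℝ) ≤ 2 * t - 1 := (hE₂ h2).1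
  have h1 : 2 * t < ((k : ℝ) + 1) / 2 ^ n := hmem.2
  have hle : ((k : ℝ) + 1) / 2 ^ n ≤ 1 := by
    rw [div_le_one (by positivity)]
    have : ((k : ℕ) : ℝ) + 1 ≤ ((2 ^ n : ℕ) : ℝ) := by exact_mod_cast hk
    push_cast at this ⊢
    linarith
  linarith

lemma Eset_inter_right {E₁ E₂ : Set ℝ} (hE₁ : E₁ ⊆ Set.Ico 0 1) (n k : ℕ) :
    Eset E₁ E₂ ∩ dyadicI (n + 1) (k + 2 ^ n) = (fun t : ℝ => 2 * t - 1) ⁻¹' (E₂ ∩ dyadicI n k) := by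
  rw [Eset_preimage, ← dyadic_pre', Set.union_inter_distrib_right, Set.preimage_inter]
  suffices h : (fun t : ℝ => 2 * t) ⁻¹' E₁ ∩ (fun t : ℝ => 2 * t - 1) ⁻¹' dyadicI n k = ∅ by
    rw [h, Set.empty_union]
  ext t
  simp only [Set.mem_inter_iff, Set.mem_preimage, Set.mem_empty_iff_false, iff_false, not_and]
  intro h1 hmem
  have h0 : 2 * t < 1 := (hE₁ h1).2
  have hge : (k : ℝ) / 2 ^ n ≤ 2 * t - 1 := hmem.1
  have : (0 : ℝ) ≤ (k : ℝ) / 2 ^ n := by positivity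
  linarith

lemma dyadicI_zero : dyadicI 0 0 = Set.Ico (0 : ℝ) 1 := by
  simp [dyadicI]
lemma Aterm_concat_left {E₁ E₂ : Set ℝ} (hE₂ : E₂ ⊆ Set.Ico 0 1)
    (hm₁ : MeasurableSet E₁) (hm₂ : MeasurableSet E₂)
    (α₁ α₂ : ℕ × ℕ → ℝ) (γ : ℝ) (t : ℝ) (ht : t < 1 / 2) (n k : ℕ) :
    Aterm (concat α₁ α₂ γ) (Set.indicator (Eset E₁ E₂) fun _ => 1) t (n + 1, k)
      = Aterm α₁ (Set.indicator E₁ fun _ => 1) (2 * t) (n, k) := by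
  rw [Aterm_apply, Aterm_apply]
  by_cases hk : k < 2 ^ n
  · rw [if_pos hk, if_pos (lt_of_lt_of_le hk (Nat.pow_le_pow_right (by norm_num) (Nat.le_succ n)))]
    have hconcat : concat α₁ α₂ γ (n + 1, k) = α₁ (n, k) := by simp [concat, hk]
    rw [hconcat]
    have hint : ∫ s in dyadicI (n + 1) k, |Set.indicator (Eset E₁ E₂) (fun _ => (1:ℝ)) s|
        = (∫ s in dyadicI n k, |Set.indicator E₁ (fun _ => (1:ℝ)) s|) / 2 := by
      rw [integral_abs_indicator (Eset_meas hm₁ hm₂), integral_abs_indicator hm₁,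
        Eset_inter_left hE₂ n k hk, vol_pre_two, ENNReal.toReal_div]
      norm_num
    rw [hint, ← dyadic_pre, ind_pre, pow_succ]
    ring
  · rw [if_neg hk]
    by_cases hk2 : k < 2 ^ (n + 1)
    · rw [if_pos hk2]
      have hind : Set.indicator (dyadicI (n + 1) k) (fun _ => (1:ℝ)) t = 0 := by
        apply Set.indicator_of_notMem
        intro hmem
        have h1 : ((k : ℝ)) / 2 ^ (n + 1) ≤ t := hmem.1
        have hk' : ((2 ^ n : ℕ) : ℝ) ≤ (k : ℝ) := by exact_mod_cast Nat.not_lt.mp hk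
        push_cast at hk'
        have h05 : (1 : ℝ) / 2 ≤ (k : ℝ) / 2 ^ (n + 1) := by
          rw [div_le_div_iff₀ (by norm_num) (by positivity), pow_succ]
          nlinarith [pow_pos (by norm_num : (0:ℝ) < 2) n]
        linarith
      rw [hind, mul_zero]
    · rw [if_neg hk2]

lemma Aterm_concat_right {E₁ E₂ : Set ℝ} (hE₁ : E₁ ⊆ Set.Ico 0 1)
    (hm₁ : MeasurableSet E₁) (hm₂ : MeasurableSet E₂)
    (α₁ α₂ : ℕ × ℕ → ℝ) (γ : ℝ) (t : ℝ) (n k : ℕ) :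
    Aterm (concat α₁ α₂ γ) (Set.indicator (Eset E₁ E₂) fun _ => 1) t (n + 1, k + 2 ^ n)
      = Aterm α₂ (Set.indicator E₂ fun _ => 1) (2 * t - 1) (n, k) := by
  rw [Aterm_apply, Aterm_apply]
  have h2 : (2 : ℕ) ^ (n + 1) = 2 ^ n + 2 ^ n := by rw [pow_succ]; omega
  by_cases hk : k < 2 ^ n
  · rw [if_pos hk, if_pos (by omega)]
    have hconcat : concat α₁ α₂ γ (n + 1, k + 2 ^ n) = α₂ (n, k) := by
      simp [concat]
    rw [hconcat]
    have hint : ∫ s in dyadicI (n + 1) (k + 2 ^ n),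
          |Set.indicator (Eset E₁ E₂) (fun _ => (1:ℝ)) s|
        = (∫ s in dyadicI n k, |Set.indicator E₂ (fun _ => (1:ℝ)) s|) / 2 := by
      rw [integral_abs_indicator (Eset_meas hm₁ hm₂), integral_abs_indicator hm₂,
        Eset_inter_right hE₁ n k, vol_pre_two_sub, ENNReal.toReal_div]
      norm_num
    rw [hint, ← dyadic_pre', ind_pre, pow_succ]
    ring
  · rw [if_neg hk, if_neg (by omega)]

lemma Aterm_dead_left (α : ℕ × ℕ → ℝ) (f : ℝ → ℝ) (t : ℝ) (ht : 1 / 2 ≤ t)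
    (n k : ℕ) (hk : k < 2 ^ n) : Aterm α f t (n + 1, k) = 0 := by
  rw [Aterm_apply]
  by_cases hk2 : k < 2 ^ (n + 1)
  · rw [if_pos hk2]
    have hind : Set.indicator (dyadicI (n + 1) k) (fun _ => (1:ℝ)) t = 0 := by
      apply Set.indicator_of_notMem
      intro hmem
      have h1 : t < ((k : ℝ) + 1) / 2 ^ (n + 1) := hmem.2
      have hk' : ((k : ℝ) + 1) ≤ 2 ^ n := by
        have : ((k + 1 : ℕ) : ℝ) ≤ ((2 ^ n : ℕ) : ℝ) := by exact_mod_cast hk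
        push_cast at this; linarith
      have : ((k : ℝ) + 1) / 2 ^ (n + 1) ≤ 1 / 2 := by
        rw [div_le_div_iff₀ (by positivity) (by norm_num), pow_succ]
        nlinarith [pow_pos (by norm_num : (0:ℝ) < 2) n]
      linarith
    rw [hind, mul_zero]
  · rw [if_neg hk2]

lemma Aterm_zero_row (α : ℕ × ℕ → ℝ) (f : ℝ → ℝ) (t : ℝ) (k : ℕ) (hk : k ≠ 0) :
    Aterm α f t (0, k) = 0 := by
  rw [Aterm_apply, if_neg (by omega)]
lemma Aterm_zero_zero {E₁ E₂ : Set ℝ} (hE₁ : E₁ ⊆ Set.Ico 0 1) (hE₂ : E₂ ⊆ Set.Ico 0 1)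
    (hm₁ : MeasurableSet E₁) (hm₂ : MeasurableSet E₂)
    (α₁ α₂ : ℕ × ℕ → ℝ) (γ : ℝ) (t : ℝ) (ht : t ∈ Set.Ico (0:ℝ) 1) :
    Aterm (concat α₁ α₂ γ) (Set.indicator (Eset E₁ E₂) fun _ => 1) t (0, 0)
      = γ * (volume (Eset E₁ E₂)).toReal := by
  rw [Aterm_apply, if_pos (by norm_num)]
  have hc : concat α₁ α₂ γ (0, 0) = γ := rfl
  rw [hc, dyadicI_zero, integral_abs_indicator (Eset_meas hm₁ hm₂),
    Set.inter_eq_left.mpr (Eset_subset hE₁ hE₂), Set.indicator_of_mem ht, pow_zero]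
  ring

lemma Aop_concat_left {E₁ E₂ : Set ℝ} (hE₁ : E₁ ⊆ Set.Ico 0 1) (hE₂ : E₂ ⊆ Set.Ico 0 1)
    (hm₁ : MeasurableSet E₁) (hm₂ : MeasurableSet E₂)
    (α₁ α₂ : ℕ × ℕ → ℝ) (γ : ℝ) (t : ℝ) (ht : t ∈ Set.Ico (0:ℝ) (1/2))
    (hs : Summable (Aterm α₁ (Set.indicator E₁ fun _ => 1) (2 * t))) :
    Aop (concat α₁ α₂ γ) (Set.indicator (Eset E₁ E₂) fun _ => 1) t
      = γ * (volume (Eset E₁ E₂)).toReal + Aop α₁ (Set.indicator E₁ fun _ => 1) (2 * t) := by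
  set F := Aterm (concat α₁ α₂ γ) (Set.indicator (Eset E₁ E₂) fun _ => 1) t with hF
  set g : ℕ × ℕ → ℕ × ℕ := fun p => (p.1 + 1, p.2) with hgdef
  have hg : Function.Injective g := by
    rintro ⟨a, b⟩ ⟨c, d⟩ h
    simp only [g, Prod.mk.injEq] at h
    exact Prod.ext (by omega) h.2
  have hrange : ∀ p : ℕ × ℕ, p ∉ Set.range g → p.1 = 0 := by
    rintro ⟨n, k⟩ h
    by_contra h0
    exact h ⟨(n - 1, k), Prod.ext (by simp [g]; omega) rfl⟩
  set F₀ : ℕ × ℕ → ℝ := fun p => if p.1 = 0 then 0 else F p with hF0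
  have hcomp : ∀ p, F₀ (g p) = Aterm α₁ (Set.indicator E₁ fun _ => 1) (2 * t) p := by
    rintro ⟨n, k⟩
    simp only [F₀, g, if_neg (Nat.succ_ne_zero n)]
    exact Aterm_concat_left hE₂ hm₁ hm₂ α₁ α₂ γ t ht.2 n k
  have hzero : ∀ p ∉ Set.range g, F₀ p = 0 := fun p hp => if_pos (hrange p hp)
  have hsum0 : Summable F₀ := by
    rw [← hg.summable_iff hzero]
    exact (summable_congr hcomp).mpr hs
  have htsum0 : ∑' p, F₀ p = Aop α₁ (Set.indicator E₁ fun _ => 1) (2 * t) := by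
    rw [← hg.tsum_eq (Function.support_subset_iff'.mpr hzero)]
    exact tsum_congr hcomp
  have hGsum : HasSum (fun p : ℕ × ℕ => if p = ((0:ℕ), (0:ℕ)) then F (0, 0) else 0) (F (0, 0)) :=
    hasSum_ite_eq _ _
  have hdecomp : ∀ p, F p = F₀ p + (if p = ((0:ℕ), (0:ℕ)) then F (0, 0) else 0) := by
    rintro ⟨n, k⟩
    match n with
    | 0 =>
      simp only [F₀, if_pos rfl, zero_add]
      by_cases hk0 : k = 0
      · subst hk0; rw [if_pos rfl]
      · rw [if_neg (by simp [hk0]), hF]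
        exact Aterm_zero_row _ _ _ k hk0
    | n + 1 =>
      have h1 : ((n + 1 : ℕ), k) ≠ ((0 : ℕ), (0 : ℕ)) := by simp
      rw [if_neg h1, add_zero]
      simp [F₀]
  have : Aop (concat α₁ α₂ γ) (Set.indicator (Eset E₁ E₂) fun _ => 1) t = ∑' p, F p := rfl
  rw [this, tsum_congr hdecomp, Summable.tsum_add hsum0 hGsum.summable, htsum0, hGsum.tsum_eq, hF,
    Aterm_zero_zero hE₁ hE₂ hm₁ hm₂ α₁ α₂ γ t ⟨ht.1, lt_trans ht.2 (by norm_num)⟩]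
  ring
lemma Aop_concat_right {E₁ E₂ : Set ℝ} (hE₁ : E₁ ⊆ Set.Ico 0 1) (hE₂ : E₂ ⊆ Set.Ico 0 1)
    (hm₁ : MeasurableSet E₁) (hm₂ : MeasurableSet E₂)
    (α₁ α₂ : ℕ × ℕ → ℝ) (γ : ℝ) (t : ℝ) (ht : t ∈ Set.Ico (1/2 : ℝ) 1)
    (hs : Summable (Aterm α₂ (Set.indicator E₂ fun _ => 1) (2 * t - 1))) :
    Aop (concat α₁ α₂ γ) (Set.indicator (Eset E₁ E₂) fun _ => 1) t
      = γ * (volume (Eset E₁ E₂)).toReal + Aop α₂ (Set.indicator E₂ fun _ => 1) (2 * t - 1) := by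
  set F := Aterm (concat α₁ α₂ γ) (Set.indicator (Eset E₁ E₂) fun _ => 1) t with hF
  set g : ℕ × ℕ → ℕ × ℕ := fun p => (p.1 + 1, p.2 + 2 ^ p.1) with hgdef
  have hg : Function.Injective g := by
    rintro ⟨a, b⟩ ⟨c, d⟩ h
    simp only [g, Prod.mk.injEq] at h
    have hac : a = c := by omega
    subst hac
    exact Prod.ext rfl (by omega)
  set F₀ : ℕ × ℕ → ℝ := fun p => if p.1 ≠ 0 ∧ 2 ^ (p.1 - 1) ≤ p.2 then F p else 0 with hF0
  have hzero : ∀ p ∉ Set.range g, F₀ p = 0 := by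
    rintro ⟨n, k⟩ hp
    apply if_neg
    rintro ⟨h0, hle⟩
    apply hp
    refine ⟨(n - 1, k - 2 ^ (n - 1)), Prod.ext (by simp [g]; omega) ?_⟩
    show k - 2 ^ (n - 1) + 2 ^ (n - 1) = k
    exact Nat.sub_add_cancel hle
  have hcomp : ∀ p, F₀ (g p) = Aterm α₂ (Set.indicator E₂ fun _ => 1) (2 * t - 1) p := by
    rintro ⟨n, k⟩
    have hcond : (n + 1 ≠ 0 ∧ 2 ^ (n + 1 - 1) ≤ k + 2 ^ n) := by
      constructor
      · omega
      · simp
    simp only [F₀, g, if_pos hcond]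
    exact Aterm_concat_right hE₁ hm₁ hm₂ α₁ α₂ γ t n k
  have hsum0 : Summable F₀ := by
    rw [← hg.summable_iff hzero]
    exact (summable_congr hcomp).mpr hs
  have htsum0 : ∑' p, F₀ p = Aop α₂ (Set.indicator E₂ fun _ => 1) (2 * t - 1) := by
    rw [← hg.tsum_eq (Function.support_subset_iff'.mpr hzero)]
    exact tsum_congr hcomp
  have hGsum : HasSum (fun p : ℕ × ℕ => if p = ((0:ℕ), (0:ℕ)) then F (0, 0) else 0) (F (0, 0)) :=
    hasSum_ite_eq _ _
  have hdecomp : ∀ p, F p = F₀ p + (if p = ((0:ℕ), (0:ℕ)) then F (0, 0) else 0) := by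
    rintro ⟨n, k⟩
    match n with
    | 0 =>
      have h0 : F₀ (0, k) = 0 := if_neg (by simp)
      rw [h0, zero_add]
      by_cases hk0 : k = 0
      · subst hk0; rw [if_pos rfl]
      · rw [if_neg (by simp [hk0]), hF]
        exact Aterm_zero_row _ _ _ k hk0
    | n + 1 =>
      have h1 : ((n + 1 : ℕ), k) ≠ ((0 : ℕ), (0 : ℕ)) := by simp
      rw [if_neg h1, add_zero]
      by_cases hk : 2 ^ n ≤ k
      · simp only [F₀]
        rw [if_pos ⟨Nat.succ_ne_zero n, by simpa using hk⟩]
      · have h2 : F₀ (n + 1, k) = 0 := by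
          simp only [F₀]
          apply if_neg
          rintro ⟨-, hle⟩
          simp at hle
          omega
        rw [h2, hF]
        exact Aterm_dead_left _ _ t ht.1 n k (by omega)
  have hrw : Aop (concat α₁ α₂ γ) (Set.indicator (Eset E₁ E₂) fun _ => 1) t = ∑' p, F p := rfl
  rw [hrw, tsum_congr hdecomp, Summable.tsum_add hsum0 hGsum.summable, htsum0, hGsum.tsum_eq, hF,
    Aterm_zero_zero hE₁ hE₂ hm₁ hm₂ α₁ α₂ γ t ⟨le_trans (by norm_num) ht.1, ht.2⟩]
  ring

/-- Dynamics of level sets under concatenation: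
`|{A_{α₁⊕_γα₂}(1_{E₁⊕E₂}) ≥ λ + γx}| = (|{A_{α₁}(1_{E₁}) ≥ λ}| + |{A_{α₂}(1_{E₂}) ≥ λ}|)/2`,
where `x = |E₁ ⊕ E₂|`. -/
theorem stmt4 (E₁ E₂ : Set ℝ) (hE₁ : E₁ ⊆ Set.Ico 0 1) (hE₂ : E₂ ⊆ Set.Ico 0 1)
    (hm₁ : MeasurableSet E₁) (hm₂ : MeasurableSet E₂)
    (α₁ α₂ : ℕ × ℕ → ℝ) (hα₁ : ∀ p, 0 ≤ α₁ p) (hα₂ : ∀ p, 0 ≤ α₂ p)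
    (hs₁ : ∀ y : ℝ, Summable (Aterm α₁ (Set.indicator E₁ fun _ => 1) y))
    (hs₂ : ∀ y : ℝ, Summable (Aterm α₂ (Set.indicator E₂ fun _ => 1) y))
    (γ : ℝ) (hγ : 0 ≤ γ) (lam : ℝ) :
    volume {t ∈ Set.Ico (0 : ℝ) 1 |
        lam + γ * (volume ((fun s => s / 2) '' E₁ ∪ (fun s => s / 2 + 1 / 2) '' E₂)).toReal
          ≤ Aop (concat α₁ α₂ γ)
              (Set.indicator ((fun s => s / 2) '' E₁ ∪ (fun s => s / 2 + 1 / 2) '' E₂)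
                fun _ => 1) t}
      = (volume {t ∈ Set.Ico (0 : ℝ) 1 | lam ≤ Aop α₁ (Set.indicator E₁ fun _ => 1) t}
          + volume {t ∈ Set.Ico (0 : ℝ) 1 | lam ≤ Aop α₂ (Set.indicator E₂ fun _ => 1) t})
        / 2 := by
  have hU : (fun s => s / 2) '' E₁ ∪ (fun s => s / 2 + 1 / 2) '' E₂ = Eset E₁ E₂ := rfl
  rw [hU]
  set x := (volume (Eset E₁ E₂)).toReal with hx
  set S : Set ℝ := {t ∈ Set.Ico (0 : ℝ) 1 |
      lam + γ * x ≤ Aop (concat α₁ α₂ γ) (Set.indicator (Eset E₁ E₂) fun _ => 1) t} with hS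
  set S₁ : Set ℝ := {t ∈ Set.Ico (0 : ℝ) 1 | lam ≤ Aop α₁ (Set.indicator E₁ fun _ => 1) t}
    with hS1
  set S₂ : Set ℝ := {t ∈ Set.Ico (0 : ℝ) 1 | lam ≤ Aop α₂ (Set.indicator E₂ fun _ => 1) t}
    with hS2
  have hL : S ∩ Set.Ico 0 (1/2) = (fun t : ℝ => 2 * t) ⁻¹' S₁ := by
    ext t
    simp only [hS, hS1, Set.mem_inter_iff, Set.mem_setOf_eq, Set.mem_preimage, Set.mem_Ico]
    constructor
    · rintro ⟨⟨⟨ht0, ht1⟩, hcond⟩, ht0', htl⟩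
      have hpt := Aop_concat_left hE₁ hE₂ hm₁ hm₂ α₁ α₂ γ t ⟨ht0, htl⟩ (hs₁ (2 * t))
      rw [hpt] at hcond
      exact ⟨⟨by linarith, by linarith⟩, by linarith⟩
    · rintro ⟨⟨h0, h1⟩, hcond⟩
      have ht0 : (0:ℝ) ≤ t := by linarith
      have htl : t < 1/2 := by linarith
      have hpt := Aop_concat_left hE₁ hE₂ hm₁ hm₂ α₁ α₂ γ t ⟨ht0, htl⟩ (hs₁ (2 * t))
      exact ⟨⟨⟨ht0, by linarith⟩, by rw [hpt]; linarith⟩, ht0, htl⟩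
  have hR : S \ Set.Ico 0 (1/2) = (fun t : ℝ => 2 * t - 1) ⁻¹' S₂ := by
    ext t
    simp only [hS, hS2, Set.mem_diff, Set.mem_setOf_eq, Set.mem_preimage, Set.mem_Ico, not_and,
      not_lt]
    constructor
    · rintro ⟨⟨⟨ht0, ht1⟩, hcond⟩, hnot⟩
      have hge : (1:ℝ)/2 ≤ t := hnot ht0
      have hpt := Aop_concat_right hE₁ hE₂ hm₁ hm₂ α₁ α₂ γ t ⟨hge, ht1⟩ (hs₂ (2 * t - 1))
      rw [hpt] at hcond
      exact ⟨⟨by linarith, by linarith⟩, by linarith⟩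
    · rintro ⟨⟨h0, h1⟩, hcond⟩
      have hge : (1:ℝ)/2 ≤ t := by linarith
      have ht1 : t < 1 := by linarith
      have hpt := Aop_concat_right hE₁ hE₂ hm₁ hm₂ α₁ α₂ γ t ⟨hge, ht1⟩ (hs₂ (2 * t - 1))
      exact ⟨⟨⟨by linarith, ht1⟩, by rw [hpt]; linarith⟩, fun _ => hge⟩
  rw [← measure_inter_add_diff S (measurableSet_Ico : MeasurableSet (Set.Ico (0:ℝ) (1/2))),
    hL, hR, vol_pre_two, vol_pre_two_sub, ENNReal.div_add_div_same]
end

section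
/- For integers m ≥ 1 and k ≥ 0, and λ with m−k+3−2^{1−k} < λ ≤ m−k+4−2^{−k} (where the slopes a_m(λ), b_m(λ), c_m(λ) are as defined for the range k < λ ≤ k+1 with k ≥ 3): if λ_{m−k+2}^m < λ ≤ λ_{m−k+3}^{m+1} then b_m(λ) ≤ a_{m+1}(λ), where 1/a_{m+1}(λ) = 2^{m+2}(λ−(k−1))(1/(2^{m−k+4}−1) − 1/(2^{m−k+5}−1)) and 1/b_m(λ) = 2^{m+1}((λ−k)/(2^{m−k+2}−1) − (λ−(k−1))/(2^{m−k+4}−1)), and λ_j^n = n−j+3−2^{−j}. Equivalently: (λ−k)/(λ−(k−1)) ≥ (2^{m−k+2}−1)(2^{m−k+6}−1)/((2^{m−k+4}−1)(2^{m−k+5}−1)) holds whenever (λ−k)/(λ−(k−1)) > (2^{m−k+2}−1)/(2^{m−k+3}−1). -/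
/-- For integers `k ≥ 3`, `m ≥ k−1`, and `λ` in the range
`λ_{m−k+2}^m < λ ≤ λ_{m−k+3}^{m+1}` (where `λ_j^n = n−j+3−2^{−j}`), the slope
comparison `b_m(λ) ≤ a_{m+1}(λ)` holds, where
`1/a_{m+1}(λ) = 2^{m+2}(λ−(k−1))(1/(2^{m−k+4}−1) − 1/(2^{m−k+5}−1))` and
`1/b_m(λ) = 2^{m+1}((λ−k)/(2^{m−k+2}−1) − (λ−(k−1))/(2^{m−k+4}−1))`. -/
theorem stmt12 (k m : ℤ) (hk : 3 ≤ k) (hm : k - 1 ≤ m) (lam : ℝ)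
    (hlo : (m : ℝ) - ((m - k + 2 : ℤ) : ℝ) + 3 - (2 : ℝ) ^ (-(m - k + 2)) < lam)
    (hhi : lam ≤ ((m + 1 : ℤ) : ℝ) - ((m - k + 3 : ℤ) : ℝ) + 3 - (2 : ℝ) ^ (-(m - k + 3))) :
    1 / ((2 : ℝ) ^ (m + 1) * ((lam - (k : ℝ)) / ((2 : ℝ) ^ (m - k + 2) - 1)
          - (lam - ((k : ℝ) - 1)) / ((2 : ℝ) ^ (m - k + 4) - 1)))
      ≤ 1 / ((2 : ℝ) ^ (m + 2) * (lam - ((k : ℝ) - 1))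
          * (1 / ((2 : ℝ) ^ (m - k + 4) - 1) - 1 / ((2 : ℝ) ^ (m - k + 5) - 1))) := by
  have h2ne : (2 : ℝ) ≠ 0 := two_ne_zero
  set x : ℝ := (2 : ℝ) ^ (m - k + 2) with hxdef
  have hx : (2 : ℝ) ≤ x := by
    calc (2 : ℝ) = (2 : ℝ) ^ (1 : ℤ) := by norm_num
    _ ≤ x := by
        apply zpow_le_zpow_right₀ (by norm_num : (1:ℝ) ≤ 2)
        omega
  have hx0 : (0 : ℝ) < x := by linarith
  have e4 : (2 : ℝ) ^ (m - k + 4) = 4 * x := by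
    rw [show m - k + 4 = (m - k + 2) + 2 by ring, zpow_add₀ h2ne, ← hxdef]
    norm_num; ring
  have e5 : (2 : ℝ) ^ (m - k + 5) = 8 * x := by
    rw [show m - k + 5 = (m - k + 2) + 3 by ring, zpow_add₀ h2ne, ← hxdef]
    norm_num; ring
  have eneg : (2 : ℝ) ^ (-(m - k + 2)) = x⁻¹ := by rw [zpow_neg, ← hxdef]
  have eneg3 : (2 : ℝ) ^ (-(m - k + 3)) = (2 * x)⁻¹ := by
    rw [zpow_neg, show m - k + 3 = (m - k + 2) + 1 by ring, zpow_add₀ h2ne, ← hxdef]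
    norm_num; ring
  set p : ℝ := (2 : ℝ) ^ (m + 1) with hpdef
  have hp : (0 : ℝ) < p := by positivity
  have em2 : (2 : ℝ) ^ (m + 2) = 2 * p := by
    rw [show m + 2 = (m + 1) + 1 by ring, zpow_add₀ h2ne, hpdef]
    norm_num; ring
  set t : ℝ := lam - (k : ℝ) with htdef
  have tlo : 1 - x⁻¹ < t := by
    rw [eneg] at hlo
    push_cast at hlo
    rw [htdef]; linarith
  have hxi : x⁻¹ ≤ 1 / 2 := by
    rw [inv_le_comm₀ hx0 (by norm_num)]
    linarith
  have ht0 : (0 : ℝ) < t := by linarith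
  have htx : x - 1 < t * x := by
    have := mul_lt_mul_of_pos_right tlo hx0
    have hxx : (1 - x⁻¹) * x = x - 1 := by field_simp
    linarith [hxx ▸ this]
  have h1 : (0 : ℝ) < x - 1 := by linarith
  have h2 : (0 : ℝ) < 4 * x - 1 := by linarith
  have h3 : (0 : ℝ) < 8 * x - 1 := by linarith
  have key : (t + 1) * (x - 1) * (16 * x - 1) ≤ t * (4 * x - 1) * (8 * x - 1) := by
    nlinarith [mul_le_mul_of_nonneg_right htx.le (by linarith : (0:ℝ) ≤ 16 * x + 5)]
  -- rewrite the goal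
  rw [e4, e5, em2]
  have hlamk : lam - ((k : ℝ) - 1) = t + 1 := by rw [htdef]; ring
  rw [hlamk]
  have hfr : 1 / (4 * x - 1) - 1 / (8 * x - 1) = 4 * x / ((4 * x - 1) * (8 * x - 1)) := by
    rw [div_sub_div _ _ h2.ne' h3.ne']; ring
  have hA : (0 : ℝ) < 2 * p * (t + 1) * (1 / (4 * x - 1) - 1 / (8 * x - 1)) := by
    rw [hfr]; positivity
  have hAB : 2 * p * (t + 1) * (1 / (4 * x - 1) - 1 / (8 * x - 1))
      ≤ p * (t / (x - 1) - (t + 1) / (4 * x - 1)) := by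
    have hb : 2 * (t + 1) * (1 / (4 * x - 1) - 1 / (8 * x - 1))
        ≤ t / (x - 1) - (t + 1) / (4 * x - 1) := by
      rw [hfr, div_sub_div _ _ h1.ne' h2.ne',
        show 2 * (t + 1) * (4 * x / ((4 * x - 1) * (8 * x - 1)))
          = 2 * (t + 1) * (4 * x) / ((4 * x - 1) * (8 * x - 1)) from by ring,
        div_le_div_iff₀ (by positivity) (by positivity)]
      nlinarith [mul_nonneg (sub_nonneg.mpr key) h2.le]
    calc 2 * p * (t + 1) * (1 / (4 * x - 1) - 1 / (8 * x - 1))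
        = p * (2 * (t + 1) * (1 / (4 * x - 1) - 1 / (8 * x - 1))) := by ring
      _ ≤ p * (t / (x - 1) - (t + 1) / (4 * x - 1)) :=
          mul_le_mul_of_nonneg_left hb hp.le
  exact one_div_le_one_div_of_le hA hAB
end

section
/- Let f̃ : [0,∞) × ℝ → [0,1] satisfy: f̃(·, λ) is concave for each λ, f̃ is non-increasing in λ, and f̃(x, λ+x) ≥ (1/2) f̃(2x, λ) for all x ≥ 0, λ ∈ ℝ. Then for all 0 < A < 1, x ≥ 0 and λ ∈ ℝ, ((A+1)/2) f̃(2x/(A+1), λ+x) ≥ (A/2) f̃(2x/A, λ). -/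
/-- If `f̃ : [0,∞)×ℝ → [0,1]` is concave in `x`, non-increasing in `λ`, and satisfies
`f̃(x, λ+x) ≥ (1/2) f̃(2x, λ)`, then for all `0 < A < 1`,
`((A+1)/2) f̃(2x/(A+1), λ+x) ≥ (A/2) f̃(2x/A, λ)`. -/
theorem stmt16 (f : ℝ → ℝ → ℝ)
    (hrange : ∀ x lam, 0 ≤ x → f x lam ∈ Set.Icc (0 : ℝ) 1)
    (hconc : ∀ lam, ConcaveOn ℝ (Set.Ici (0 : ℝ)) (fun x => f x lam))
    (hmono : ∀ x, 0 ≤ x → ∀ l₁ l₂ : ℝ, l₁ ≤ l₂ → f x l₂ ≤ f x l₁)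
    (hjump : ∀ x lam, 0 ≤ x → (1 / 2) * f (2 * x) lam ≤ f x (lam + x)) :
    ∀ A x lam, 0 < A → A < 1 → 0 ≤ x →
      (A / 2) * f (2 * x / A) lam ≤ ((A + 1) / 2) * f (2 * x / (A + 1)) (lam + x) := by
  intro A x lam hA0 hA1 hx
  have hA1pos : (0:ℝ) < A + 1 := by linarith
  -- key concavity fact: f (t*z) lam ≥ t * f z lam for t ∈ [0,1], z ≥ 0
  have key : ∀ t z : ℝ, 0 ≤ t → t ≤ 1 → 0 ≤ z →
      t * f z lam ≤ f (t * z) lam := by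
    intro t z ht ht1 hz
    have h := (hconc lam).2 (Set.self_mem_Ici (a := (0:ℝ))) (Set.mem_Ici.2 hz)
      (by linarith : (0:ℝ) ≤ 1 - t) ht (by ring)
    simp only [smul_eq_mul, mul_zero, zero_add] at h
    have hf0 : 0 ≤ f 0 lam := (hrange 0 lam le_rfl).1
    nlinarith
  -- step 1: f (2x/(A+1)) (lam + x) ≥ (1/2) f (4x/(A+1)) lam
  set y : ℝ := 2 * x / (A + 1) with hy
  have hy0 : 0 ≤ y := by positivity
  have hj := hjump y (lam + x - y) hy0
  have hyx : x ≤ y := by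
    rw [hy, le_div_iff₀ hA1pos]; nlinarith
  have hstep1 : (1/2) * f (2 * y) lam ≤ f y (lam + x) := by
    refine le_trans (b := (1/2) * f (2 * y) (lam + x - y)) ?_ ?_
    · have : f (2 * y) lam ≤ f (2 * y) (lam + x - y) := by
        exact hmono (2 * y) (by positivity) _ _ (by linarith)
      nlinarith
    · have := hj
      rwa [sub_add_cancel] at this
  -- step 2: (2A/(A+1)) * f (2x/A) lam ≤ f (2y) lam
  have hkey := key (2 * A / (A + 1)) (2 * x / A) (by positivity)
    (by rw [div_le_one hA1pos]; linarith) (by positivity)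
  have harg : (2 * A / (A + 1)) * (2 * x / A) = 2 * y := by
    field_simp [hy]; rw [hy]; field_simp
  rw [harg] at hkey
  -- combine
  have h2 : (A + 1) / 2 * ((1/2) * f (2 * y) lam) ≤ (A + 1) / 2 * f y (lam + x) := by
    apply mul_le_mul_of_nonneg_left hstep1 (by positivity)
  have h3 : (A + 1) / 2 * ((1/2) * ((2 * A / (A + 1)) * f (2 * x / A) lam))
      ≤ (A + 1) / 2 * ((1/2) * f (2 * y) lam) := by
    apply mul_le_mul_of_nonneg_left (mul_le_mul_of_nonneg_left hkey (by norm_num)) (by positivity)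
  have heq : (A + 1) / 2 * ((1/2) * ((2 * A / (A + 1)) * f (2 * x / A) lam))
      = (A / 2) * f (2 * x / A) lam := by
    field_simp
  linarith
end
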